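/- Let s ∈ ℂ and A = (A_1,…,A_n) ∈ ℂⁿ. Suppose {f^{(k)}_{j,m}} and {f̃^{(k)}_{j,m}} are two formal solutions of the system dy_j/dt = i m_j y_j + ε V_j(ε, e^{±it}, y) such that (ii) their ε⁰ parts equal the unperturbed solution, i.e. f^{(0)}_{j,m} = f̃^{(0)}_{j,m} = A_j δ_{m,m_j} (constant polynomials), and (iii) their resonant coefficients agree at t = s, i.e. f^{(k)}_{j,m_j}(s) = f̃^{(k)}_{j,m_j}(s) for all k ≥ 0 and all 1 ≤ j ≤ n. Then the two formal solutions coincide: f^{(k)}_{j,m} = f̃^{(k)}_{j,m} for all k, j, m. -/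

import Mathlib

noncomputable section

open Polynomial

/-- Finite `ℂ[t]`-linear combinations of Fourier modes `e^{i m t}` (`m : ℤ`):
the mode-`m` coefficient of `x` is the polynomial `x m`. -/
abbrev FourierPoly : Type := AddMonoidAlgebra (Polynomial ℂ) ℤ

/-- Formal power series in `ε` whose coefficients are finite Fourier sums with
polynomial-in-`t` coefficients. -/
abbrev FSeries : Type := PowerSeries FourierPoly

/-- The mode `e^{i t}`, as a unit of `FSeries` (inverse `e^{-i t}`). -/
def zUnit : FSeriesˣ where
  val := PowerSeries.C (AddMonoidAlgebra.single 1 1)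
  inv := PowerSeries.C (AddMonoidAlgebra.single (-1) 1)
  val_inv := by
    rw [← map_mul, AddMonoidAlgebra.single_mul_single]
    norm_num [AddMonoidAlgebra.one_def]
  inv_val := by
    rw [← map_mul, AddMonoidAlgebra.single_mul_single]
    norm_num [AddMonoidAlgebra.one_def]

/-- Evaluation of a Laurent polynomial in `z` (an element of `ℂ[z,z⁻¹] = AddMonoidAlgebra ℂ ℤ`)
at `z = e^{i t}`, landing in `FSeries`. -/
def zEval : AddMonoidAlgebra ℂ ℤ →+* FSeries :=
  AddMonoidAlgebra.liftNCRingHom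
    ((PowerSeries.C (R := FourierPoly)).comp (AddMonoidAlgebra.singleZeroRingHom.comp (Polynomial.C : ℂ →+* Polynomial ℂ)))
    ((Units.coeHom _).comp (zpowersHom _ zUnit))
    (fun _ _ => Commute.all _ _)

/-- Evaluation of `V ∈ ℂ[ε, z, z⁻¹, y₁, …, yₙ]` (encoded as a polynomial in the `y`-variables
with coefficients in `ℂ[z,z⁻¹][ε]`) at `z = e^{i t}`, `ε = ε` (the power series variable)
and given formal series values of the `y`-variables. -/
def VEval {n : ℕ} (V : MvPolynomial (Fin n) (Polynomial (AddMonoidAlgebra ℂ ℤ)))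
    (y : Fin n → FSeries) : FSeries :=
  MvPolynomial.eval₂ (Polynomial.eval₂RingHom zEval PowerSeries.X) y V

/-- The formal series `y_j(ε,t) = Σ_k ε^k Σ_m f^{(k)}_{j,m}(t) e^{i m t}` attached to a family
`f^{(k)}_{j,m}` of polynomials (with, for each `k` and `j`, finite support in `m`). -/
def famSeries {n : ℕ} (F : ℕ → Fin n → FourierPoly) (j : Fin n) : FSeries :=
  PowerSeries.mk fun k => F k j

/-- `F` encodes a formal solution `y_j(ε,t) = Σ_k ε^k Σ_m f^{(k)}_{j,m}(t) e^{i m t}` of the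
system `dy_j/dt = i m_j y_j + ε V_j(ε, e^{± i t}, y)`: order by order in `ε` and mode by mode
in `e^{i m t}`,
`(d/dt) f^{(k)}_{j,m} + i (m - m_j) f^{(k)}_{j,m} = [ε V_j(ε, e^{± i t}, y(ε,t))]_{ε^k e^{i m t}}`.
(Finiteness of the support in `m` at each order is built into `FourierPoly`.) -/
def IsFormalSolution {n : ℕ} (mvec : Fin n → ℤ)
    (V : Fin n → MvPolynomial (Fin n) (Polynomial (AddMonoidAlgebra ℂ ℤ)))
    (F : ℕ → Fin n → FourierPoly) : Prop :=
  ∀ (k : ℕ) (j : Fin n) (m : ℤ),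
    derivative ((F k j).coeff m) + Polynomial.C (Complex.I * ((m : ℂ) - (mvec j : ℂ))) * (F k j).coeff m
      = (PowerSeries.coeff (R := FourierPoly) k (PowerSeries.X * VEval (V j) (famSeries F))).coeff m

/-- uniqueness of the naive perturbative solution, semisimple case:
two formal solutions of `dy_j/dt = i m_j y_j + ε V_j(ε,e^{±it},y)` whose `ε⁰` parts both equal
the unperturbed solution `A_j e^{i m_j t}` and whose resonant coefficients agree at `t = s`
coincide. -/
theorem secular_uniqueness {n : ℕ} (hn : 0 < n) (mvec : Fin n → ℤ)
    (V : Fin n → MvPolynomial (Fin n) (Polynomial (AddMonoidAlgebra ℂ ℤ)))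
    (s : ℂ) (A : Fin n → ℂ)
    (F F' : ℕ → Fin n → FourierPoly)
    (hsol : IsFormalSolution mvec V F) (hsol' : IsFormalSolution mvec V F')
    (hinit : ∀ j, F 0 j = AddMonoidAlgebra.single (mvec j) (Polynomial.C (A j)))
    (hinit' : ∀ j, F' 0 j = AddMonoidAlgebra.single (mvec j) (Polynomial.C (A j)))
    (hres : ∀ (k : ℕ) (j : Fin n), ((F k j).coeff (mvec j)).eval s = ((F' k j).coeff (mvec j)).eval s) :
    F = F' := by
  -- auxiliary fact: a complex polynomial with p' + c p = 0, c ≠ 0, is zero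
  have polyzero : ∀ (c : ℂ) (p : Polynomial ℂ), c ≠ 0 →
      derivative p + Polynomial.C c * p = 0 → p = 0 := by
    intro c p hc h
    by_contra hp
    have hd : derivative p = -(Polynomial.C c * p) := by linear_combination h
    have h1 : (Polynomial.C c * p).degree = p.degree := by
      rw [degree_C_mul hc]
    have h2 : (derivative p).degree < p.degree := degree_derivative_lt hp
    rw [hd, degree_neg, h1] at h2
    exact lt_irrefl _ h2
  -- congruence: coeff k of VEval only depends on coefficients ≤ k of y
  have hVcongr : ∀ (k : ℕ) (W : MvPolynomial (Fin n) (Polynomial (AddMonoidAlgebra ℂ ℤ)))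
      (y y' : Fin n → FSeries),
      (∀ j, ∀ i ≤ k, PowerSeries.coeff (R := FourierPoly) i (y j)
        = PowerSeries.coeff (R := FourierPoly) i (y' j)) →
      PowerSeries.coeff (R := FourierPoly) k (VEval W y) = PowerSeries.coeff (R := FourierPoly) k (VEval W y') := by
    intro k W y y' hy
    set I : Ideal FSeries := Ideal.span {(PowerSeries.X : FSeries) ^ (k + 1)} with hI
    set q : FSeries →+* FSeries ⧸ I := Ideal.Quotient.mk I with hq
    have mem_iff : ∀ a : FSeries, a ∈ I ↔ ∀ i < k + 1, PowerSeries.coeff (R := FourierPoly) i a = 0 := by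
      intro a
      rw [hI, Ideal.mem_span_singleton]
      exact PowerSeries.X_pow_dvd_iff
    have hyq : ∀ j, q (y j) = q (y' j) := by
      intro j
      rw [hq, Ideal.Quotient.mk_eq_mk_iff_sub_mem, mem_iff]
      intro i hi
      simp [hy j i (Nat.lt_succ_iff.mp hi)]
    have hmain : q (VEval W y) = q (VEval W y') := by
      unfold VEval
      have e1 := MvPolynomial.eval₂_comp_left (S₂ := FSeries ⧸ I) q (Polynomial.eval₂RingHom zEval PowerSeries.X) y W
      have e2 := MvPolynomial.eval₂_comp_left (S₂ := FSeries ⧸ I) q (Polynomial.eval₂RingHom zEval PowerSeries.X) y' W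
      rw [e1, e2]
      congr 1
      funext j
      exact hyq j
    rw [hq, Ideal.Quotient.mk_eq_mk_iff_sub_mem, mem_iff] at hmain
    have := hmain k (Nat.lt_succ_self k)
    rw [map_sub, sub_eq_zero] at this
    exact this
  -- main induction
  have key : ∀ k, ∀ l ≤ k, F l = F' l := by
    intro k
    induction k with
    | zero =>
      intro l hl
      interval_cases l
      funext j
      rw [hinit j, hinit' j]
    | succ k ih =>
      intro l hl
      rcases Nat.lt_succ_iff_lt_or_eq.mp (Nat.lt_succ_of_le hl) with h | h
      · exact ih l (Nat.lt_succ_iff.mp h)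
      subst h
      have hcoe : ∀ j, ∀ i ≤ k, PowerSeries.coeff (R := FourierPoly) i (famSeries F j)
          = PowerSeries.coeff (R := FourierPoly) i (famSeries F' j) := by
        intro j i hi
        simp only [famSeries, PowerSeries.coeff_mk]
        rw [ih i hi]
      funext j
      apply AddMonoidAlgebra.ext
      apply Finsupp.ext
      intro m
      have h1 := hsol (k + 1) j m
      have h2 := hsol' (k + 1) j m
      rw [PowerSeries.coeff_succ_X_mul] at h1 h2
      have hVeq : PowerSeries.coeff (R := FourierPoly) k (VEval (V j) (famSeries F))
          = PowerSeries.coeff (R := FourierPoly) k (VEval (V j) (famSeries F')) :=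
        hVcongr k (V j) _ _ hcoe
      set d : Polynomial ℂ := (F (k + 1) j).coeff m - (F' (k + 1) j).coeff m with hd
      have hde : derivative d + Polynomial.C (Complex.I * ((m : ℂ) - (mvec j : ℂ))) * d = 0 := by
        rw [hd, derivative_sub]
        rw [hVeq] at h1
        have : ((PowerSeries.coeff (R := FourierPoly) k (VEval (V j) (famSeries F'))).coeff m : Polynomial ℂ)
            = ((PowerSeries.coeff (R := FourierPoly) k (VEval (V j) (famSeries F'))).coeff m) := rfl
        linear_combination h1 - h2
      have hdzero : d = 0 := by
        by_cases hm : m = mvec j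
        · have hc0 : (Complex.I * ((m : ℂ) - (mvec j : ℂ))) = 0 := by rw [hm]; ring
          rw [hc0, map_zero, zero_mul, add_zero] at hde
          have := Polynomial.eq_C_of_derivative_eq_zero hde
          have hev : d.eval s = 0 := by
            rw [hd, hm, eval_sub, hres (k + 1) j, sub_self]
          rw [this] at hev ⊢
          rw [eval_C] at hev
          rw [hev, map_zero]
        · have hc : Complex.I * ((m : ℂ) - (mvec j : ℂ)) ≠ 0 := by
            apply mul_ne_zero Complex.I_ne_zero
            rw [sub_ne_zero]
            exact_mod_cast fun h => hm (by exact_mod_cast h)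
          exact polyzero _ _ hc hde
      rw [hd, sub_eq_zero] at hdzero
      exact hdzero
  funext k
  exact key k k le_rfl

end
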